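/- Let m be a positive integer and let a, b ∈ {1,…,2^m−1} satisfy: a ≠ b; a has exactly two nonzero binary digits; b has at most two nonzero binary digits; and (2^m−1)/gcd(m, 2^m−1) divides the integer a − b. Then β(|a − b|) ≤ 3, where β(k) denotes the number of maximal blocks of consecutive 1's in the binary representation of k. -/

import Mathlib

/-- `oneBlocks k` is the number of maximal blocks of consecutive 1's in the binary
representation of `k`: equivalently, the number of positions `i` where the `i`-th binary
digit of `k` is 1 and the `(i+1)`-th binary digit is 0. -/
noncomputable def oneBlocks (k : ℕ) : ℕ :=
  {i : ℕ | k.testBit i = true ∧ k.testBit (i + 1) = false}.ncard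

/-- If `a, b ∈ {1, …, 2^m - 1}` are distinct, `a` has exactly two nonzero binary digits,
`b` has at most two nonzero binary digits, and `(2^m - 1)/gcd(m, 2^m - 1)` divides the
integer `a - b`, then `|a - b|` has at most three maximal blocks of consecutive 1's in its
binary representation. -/

lemma testBit_sub_pow {p q : ℕ} (h : p ≤ q) (i : ℕ) :
    ((2^q - 2^p : ℕ).testBit i = true) ↔ (p ≤ i ∧ i < q) := by
  have e : (2:ℕ)^q - 2^p = 2^p * (2^(q-p) - 1) := by
    rw [Nat.mul_sub, mul_one, ← pow_add]
    congr 2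
    omega
  rw [e, Nat.testBit_two_pow_mul, Nat.testBit_two_pow_sub_one]
  by_cases h1 : p ≤ i <;> by_cases h2 : i < q <;> simp [h1, h2] <;> omega

lemma testBit_triple {p1 q1 p2 q2 p3 q3 : ℕ} (h1 : p1 ≤ q1) (h12 : q1 ≤ p2) (h2 : p2 ≤ q2)
    (h23 : q2 ≤ p3) (h3 : p3 ≤ q3) (i : ℕ) :
    (((2^q1 - 2^p1) + (2^q2 - 2^p2) + (2^q3 - 2^p3) : ℕ).testBit i = true) ↔
      ((p1 ≤ i ∧ i < q1) ∨ (p2 ≤ i ∧ i < q2) ∨ (p3 ≤ i ∧ i < q3)) := by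
  have w1 : (1:ℕ) ≤ 2^p1 := Nat.one_le_two_pow
  have w2 : (1:ℕ) ≤ 2^p2 := Nat.one_le_two_pow
  have e12 : (2:ℕ)^q1 ≤ 2^p2 := Nat.pow_le_pow_right (by norm_num) h12
  have e2 : (2:ℕ)^p2 ≤ 2^q2 := Nat.pow_le_pow_right (by norm_num) h2
  have e23 : (2:ℕ)^q2 ≤ 2^p3 := Nat.pow_le_pow_right (by norm_num) h23
  have hlt1 : 2^q1 - 2^p1 < 2^p2 := by omega
  have hlt2 : (2^q1 - 2^p1) + (2^q2 - 2^p2) < 2^p3 := by omega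
  have mul3 : (2:ℕ)^p3 * (2^(q3-p3) - 1) = 2^q3 - 2^p3 := by
    rw [Nat.mul_sub, mul_one, ← pow_add]; congr 2; omega
  have mul2 : (2:ℕ)^p2 * (2^(q2-p2) - 1) = 2^q2 - 2^p2 := by
    rw [Nat.mul_sub, mul_one, ← pow_add]; congr 2; omega
  have e3 : (2^q1 - 2^p1) + (2^q2 - 2^p2) + (2^q3 - 2^p3)
      = 2^p3 * (2^(q3-p3) - 1) + ((2^q1 - 2^p1) + (2^q2 - 2^p2)) := by omega
  rw [e3, Nat.testBit_two_pow_mul_add _ hlt2]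
  by_cases hi : i < p3
  · rw [if_pos hi]
    have e2' : (2^q1 - 2^p1) + (2^q2 - 2^p2)
        = 2^p2 * (2^(q2-p2) - 1) + (2^q1 - 2^p1) := by omega
    rw [e2', Nat.testBit_two_pow_mul_add _ hlt1]
    by_cases hi2 : i < p2
    · rw [if_pos hi2, testBit_sub_pow h1]
      omega
    · rw [if_neg hi2, Nat.testBit_two_pow_sub_one]
      simp only [decide_eq_true_eq]
      omega
  · rw [if_neg hi, Nat.testBit_two_pow_sub_one]
    simp only [decide_eq_true_eq]
    omega

lemma oneBlocks_triple_le {p1 q1 p2 q2 p3 q3 : ℕ} (h1 : p1 ≤ q1) (h12 : q1 ≤ p2) (h2 : p2 ≤ q2)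
    (h23 : q2 ≤ p3) (h3 : p3 ≤ q3) :
    oneBlocks ((2^q1 - 2^p1) + (2^q2 - 2^p2) + (2^q3 - 2^p3)) ≤ 3 := by
  have hsub : {i : ℕ | ((2^q1 - 2^p1) + (2^q2 - 2^p2) + (2^q3 - 2^p3) : ℕ).testBit i = true ∧
      ((2^q1 - 2^p1) + (2^q2 - 2^p2) + (2^q3 - 2^p3) : ℕ).testBit (i+1) = false}
      ⊆ ({q1 - 1, q2 - 1, q3 - 1} : Set ℕ) := by
    rintro i ⟨hti, hti1⟩
    have ha := (testBit_triple h1 h12 h2 h23 h3 i).mp hti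
    have hb : ¬ ((p1 ≤ i+1 ∧ i+1 < q1) ∨ (p2 ≤ i+1 ∧ i+1 < q2) ∨ (p3 ≤ i+1 ∧ i+1 < q3)) := by
      intro hc
      have := (testBit_triple h1 h12 h2 h23 h3 (i+1)).mpr hc
      rw [hti1] at this
      exact Bool.false_ne_true this
    simp only [Set.mem_insert_iff, Set.mem_singleton_iff]
    omega
  have hfin : ({q1 - 1, q2 - 1, q3 - 1} : Set ℕ).Finite := Set.toFinite _
  calc oneBlocks ((2^q1 - 2^p1) + (2^q2 - 2^p2) + (2^q3 - 2^p3))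
      ≤ ({q1 - 1, q2 - 1, q3 - 1} : Set ℕ).ncard := Set.ncard_le_ncard hsub hfin
    _ ≤ ({q2 - 1, q3 - 1} : Set ℕ).ncard + 1 := Set.ncard_insert_le _ _
    _ ≤ (({q3 - 1} : Set ℕ).ncard + 1) + 1 := by
        exact Nat.add_le_add_right (Set.ncard_insert_le _ _) 1
    _ ≤ 3 := by rw [Set.ncard_singleton]

lemma eq_zero_of_digits_sum_zero : ∀ n : ℕ, (Nat.digits 2 n).sum = 0 → n = 0 := by
  intro n
  induction n using Nat.strong_induction_on with
  | _ n ih =>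
    intro h
    by_contra hn
    rw [Nat.digits_def' (by norm_num) (Nat.pos_of_ne_zero hn)] at h
    simp only [List.sum_cons] at h
    have h2 : n / 2 = 0 := ih (n / 2) (Nat.div_lt_self (Nat.pos_of_ne_zero hn) one_lt_two) (by omega)
    omega

lemma pow_of_digits_sum_one : ∀ n : ℕ, (Nat.digits 2 n).sum = 1 → ∃ k, n = 2^k := by
  intro n
  induction n using Nat.strong_induction_on with
  | _ n ih =>
    intro h
    have hn : n ≠ 0 := by rintro rfl; simp at h
    rw [Nat.digits_def' (by norm_num) (Nat.pos_of_ne_zero hn)] at h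
    simp only [List.sum_cons] at h
    have hm : n % 2 < 2 := Nat.mod_lt _ (by norm_num)
    rcases (by omega : n % 2 = 0 ∨ n % 2 = 1) with h0 | h1
    · have := ih (n / 2) (Nat.div_lt_self (Nat.pos_of_ne_zero hn) one_lt_two) (by omega)
      obtain ⟨k, hk⟩ := this
      exact ⟨k + 1, by rw [pow_succ]; omega⟩
    · have := eq_zero_of_digits_sum_zero (n / 2) (by omega)
      exact ⟨0, by omega⟩

lemma pow_of_digits_sum_two : ∀ n : ℕ, (Nat.digits 2 n).sum = 2 →
    ∃ i j, j < i ∧ n = 2^i + 2^j := by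
  intro n
  induction n using Nat.strong_induction_on with
  | _ n ih =>
    intro h
    have hn : n ≠ 0 := by rintro rfl; simp at h
    rw [Nat.digits_def' (by norm_num) (Nat.pos_of_ne_zero hn)] at h
    simp only [List.sum_cons] at h
    have hm : n % 2 < 2 := Nat.mod_lt _ (by norm_num)
    rcases (by omega : n % 2 = 0 ∨ n % 2 = 1) with h0 | h1
    · obtain ⟨i, j, hji, hk⟩ :=
        ih (n / 2) (Nat.div_lt_self (Nat.pos_of_ne_zero hn) one_lt_two) (by omega)
      refine ⟨i + 1, j + 1, by omega, ?_⟩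
      rw [pow_succ, pow_succ]; omega
    · obtain ⟨k, hk⟩ :=
        pow_of_digits_sum_one (n / 2) (by omega)
      refine ⟨k + 1, 0, by omega, ?_⟩
      rw [pow_succ]; omega

lemma four_case (A B C D : ℕ) (hBA : B < A) (hDC : D < C)
    (hne : (2^A + 2^B : ℕ) ≠ 2^C + 2^D) (hge : (2^C + 2^D : ℕ) ≤ 2^A + 2^B) :
    oneBlocks ((2^A + 2^B) - (2^C + 2^D)) ≤ 3 := by
  have pD : (0:ℕ) < 2^D := Nat.two_pow_pos D
  have pB : (0:ℕ) < 2^B := Nat.two_pow_pos B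
  have hBA' : (2:ℕ)^B < 2^A := Nat.pow_lt_pow_right one_lt_two hBA
  have hDC' : (2:ℕ)^D < 2^C := Nat.pow_lt_pow_right one_lt_two hDC
  have hC : C ≤ A := by
    by_contra hc
    have h1 : (2:ℕ)^(A+1) ≤ 2^C := Nat.pow_le_pow_right (by norm_num) (by omega)
    rw [pow_succ] at h1
    omega
  rcases eq_or_lt_of_le hC with hCA | hCA
  · -- C = A
    subst hCA
    have hDB : D < B := by
      have : (2:ℕ)^D ≤ 2^B := by omega
      rcases lt_trichotomy D B with h | h | h
      · exact h
      · exact absurd (by rw [h]) hne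
      · exact absurd (Nat.pow_lt_pow_right one_lt_two h) (by omega)
    have hDB' : (2:ℕ)^D ≤ 2^B := le_of_lt (Nat.pow_lt_pow_right one_lt_two hDB)
    have heq : (2^C + 2^B) - (2^C + 2^D)
        = (2^B - 2^D) + (2^B - 2^B) + (2^B - 2^B) := by omega
    rw [heq]
    exact oneBlocks_triple_le (le_of_lt hDB) le_rfl le_rfl le_rfl le_rfl
  · -- C < A
    have hCA' : (2:ℕ)^C < 2^A := Nat.pow_lt_pow_right one_lt_two hCA
    rcases lt_trichotomy B C with hBC | hBC | hBC
    · -- B < C < A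
      rcases lt_trichotomy D B with hDB | hDB | hDB
      · -- D < B < C < A
        have hDB' : (2:ℕ)^D ≤ 2^B := le_of_lt (Nat.pow_lt_pow_right one_lt_two hDB)
        have heq : (2^A + 2^B) - (2^C + 2^D)
            = (2^B - 2^D) + (2^A - 2^C) + (2^A - 2^A) := by omega
        rw [heq]
        exact oneBlocks_triple_le (le_of_lt hDB) (by omega) (by omega) le_rfl le_rfl
      · -- D = B
        subst hDB
        have heq : (2^A + 2^D) - (2^C + 2^D)
            = (2^A - 2^C) + (2^A - 2^A) + (2^A - 2^A) := by omega
        rw [heq]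
        exact oneBlocks_triple_le (le_of_lt hCA) le_rfl le_rfl le_rfl le_rfl
      · -- B < D < C < A
        have hB1 : (2:ℕ)^(B+1) = 2^B * 2 := pow_succ 2 B
        have hC1 : (2:ℕ)^(C+1) = 2^C * 2 := pow_succ 2 C
        have hC1A : (2:ℕ)^(C+1) ≤ 2^A := Nat.pow_le_pow_right (by norm_num) (by omega)
        have heq : (2^A + 2^B) - (2^C + 2^D)
            = (2^(B+1) - 2^B) + (2^C - 2^D) + (2^A - 2^(C+1)) := by omega
        rw [heq]
        exact oneBlocks_triple_le (by omega) (by omega) (le_of_lt hDC) (by omega) (by omega)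
    · -- B = C
      subst hBC
      have hDA' : (2:ℕ)^D ≤ 2^A := by omega
      have heq : (2^A + 2^B) - (2^B + 2^D)
          = (2^A - 2^D) + (2^A - 2^A) + (2^A - 2^A) := by omega
      rw [heq]
      exact oneBlocks_triple_le (by omega) le_rfl le_rfl le_rfl le_rfl
    · -- D < C < B < A
      have hC1 : (2:ℕ)^(C+1) = 2^C * 2 := pow_succ 2 C
      have hA1 : (2:ℕ)^(A+1) = 2^A * 2 := pow_succ 2 A
      have hC1B : (2:ℕ)^(C+1) ≤ 2^B := Nat.pow_le_pow_right (by norm_num) (by omega)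
      have heq : (2^A + 2^B) - (2^C + 2^D)
          = (2^C - 2^D) + (2^B - 2^(C+1)) + (2^(A+1) - 2^A) := by omega
      rw [heq]
      exact oneBlocks_triple_le (le_of_lt hDC) (by omega) (by omega) (by omega) (by omega)

theorem oneBlocks_le_three_of_configuration
    (m : ℕ) (hm : 0 < m) (a b : ℕ)
    (ha1 : 1 ≤ a) (ha2 : a ≤ 2 ^ m - 1) (hb1 : 1 ≤ b) (hb2 : b ≤ 2 ^ m - 1)
    (hab : a ≠ b)
    (hsa : (Nat.digits 2 a).sum = 2) (hsb : (Nat.digits 2 b).sum ≤ 2)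
    (hdvd : (((2 ^ m - 1) / Nat.gcd m (2 ^ m - 1) : ℕ) : ℤ) ∣ (a : ℤ) - (b : ℤ)) :
    oneBlocks ((a : ℤ) - (b : ℤ)).natAbs ≤ 3 := by
  obtain ⟨i, j, hji, ha⟩ := pow_of_digits_sum_two a hsa
  subst ha
  have hji' : (2:ℕ)^j < 2^i := Nat.pow_lt_pow_right one_lt_two hji
  have pj : (0:ℕ) < 2^j := Nat.two_pow_pos j
  have hb0 : (Nat.digits 2 b).sum ≠ 0 := by
    intro h
    have := eq_zero_of_digits_sum_zero b h
    omega
  rcases (by omega : (Nat.digits 2 b).sum = 1 ∨ (Nat.digits 2 b).sum = 2) with hs1 | hs2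
  · -- b = 2^k
    obtain ⟨k, hb⟩ := pow_of_digits_sum_one b hs1
    subst hb
    rcases lt_trichotomy k i with hki | hki | hki
    · -- k < i : a > b
      rcases lt_trichotomy k j with hkj | hkj | hkj
      · -- k < j
        have hkj' : (2:ℕ)^k ≤ 2^j := le_of_lt (Nat.pow_lt_pow_right one_lt_two hkj)
        have hI1 : (2:ℕ)^(i+1) = 2^i * 2 := pow_succ 2 i
        have hd : ((2^i + 2^j : ℕ) : ℤ) - ((2^k : ℕ) : ℤ)
            = (((2^j - 2^k) + (2^(i+1) - 2^i) + (2^(i+1) - 2^(i+1)) : ℕ) : ℤ) := by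
          omega
        rw [hd, Int.natAbs_natCast]
        exact oneBlocks_triple_le (by omega) (by omega) (by omega) le_rfl le_rfl
      · -- k = j
        subst hkj
        have hI1 : (2:ℕ)^(i+1) = 2^i * 2 := pow_succ 2 i
        have hd : ((2^i + 2^k : ℕ) : ℤ) - ((2^k : ℕ) : ℤ)
            = (((2^(i+1) - 2^i) + (2^(i+1) - 2^(i+1)) + (2^(i+1) - 2^(i+1)) : ℕ) : ℤ) := by
          omega
        rw [hd, Int.natAbs_natCast]
        exact oneBlocks_triple_le (by omega) le_rfl le_rfl le_rfl le_rfl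
      · -- j < k < i
        have hkj' : (2:ℕ)^k ≤ 2^i := le_of_lt (Nat.pow_lt_pow_right one_lt_two hki)
        have hJ1 : (2:ℕ)^(j+1) = 2^j * 2 := pow_succ 2 j
        have hd : ((2^i + 2^j : ℕ) : ℤ) - ((2^k : ℕ) : ℤ)
            = (((2^(j+1) - 2^j) + (2^i - 2^k) + (2^i - 2^i) : ℕ) : ℤ) := by
          omega
        rw [hd, Int.natAbs_natCast]
        exact oneBlocks_triple_le (by omega) (by omega) (by omega) le_rfl le_rfl
    · -- k = i : impossible? no: a - b = 2^j
      subst hki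
      have hJ1 : (2:ℕ)^(j+1) = 2^j * 2 := pow_succ 2 j
      have hd : ((2^k + 2^j : ℕ) : ℤ) - ((2^k : ℕ) : ℤ)
          = (((2^(j+1) - 2^j) + (2^(j+1) - 2^(j+1)) + (2^(j+1) - 2^(j+1)) : ℕ) : ℤ) := by
        omega
      rw [hd, Int.natAbs_natCast]
      exact oneBlocks_triple_le (by omega) le_rfl le_rfl le_rfl le_rfl
    · -- i < k : b > a
      have hik : (2:ℕ)^(i+1) ≤ 2^k := Nat.pow_le_pow_right (by norm_num) (by omega)
      have hI1 : (2:ℕ)^(i+1) = 2^i * 2 := pow_succ 2 i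
      have hd : ((2^i + 2^j : ℕ) : ℤ) - ((2^k : ℕ) : ℤ)
          = -((((2^i - 2^j) + (2^k - 2^(i+1)) + (2^k - 2^k) : ℕ) : ℤ)) := by
        omega
      rw [hd, Int.natAbs_neg, Int.natAbs_natCast]
      exact oneBlocks_triple_le (by omega) (by omega) (by omega) le_rfl le_rfl
  · -- b = 2^k + 2^l
    obtain ⟨k, l, hlk, hb⟩ := pow_of_digits_sum_two b hs2
    subst hb
    rcases le_or_gt (2^k + 2^l) (2^i + 2^j) with hle | hlt
    · have hd : ((2^i + 2^j : ℕ) : ℤ) - ((2^k + 2^l : ℕ) : ℤ)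
          = (((2^i + 2^j) - (2^k + 2^l) : ℕ) : ℤ) := by omega
      rw [hd, Int.natAbs_natCast]
      exact four_case i j k l hji hlk (by omega) hle
    · have hd : ((2^i + 2^j : ℕ) : ℤ) - ((2^k + 2^l : ℕ) : ℤ)
          = -((((2^k + 2^l) - (2^i + 2^j) : ℕ) : ℤ)) := by omega
      rw [hd, Int.natAbs_neg, Int.natAbs_natCast]
      exact four_case k l i j hlk hji (by omega) (le_of_lt hlt)
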